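/- Let P be a polyomino whose complement graph Ḡ_P is chordal. Then P is simple, i.e., any two cells of ℤ² not belonging to P are joined by a path of adjacent cells none of which belongs to P. -/

import Mathlib

/-- A cell of the grid, identified with its lower-left corner. -/
abbrev Cell : Type := ℤ × ℤ

/-- Two cells are adjacent if they differ by `(±1,0)` or `(0,±1)`. -/
def Adjacent (c d : Cell) : Prop :=
  (c.1 = d.1 ∧ (c.2 = d.2 + 1 ∨ d.2 = c.2 + 1)) ∨
  (c.2 = d.2 ∧ (c.1 = d.1 + 1 ∨ d.1 = c.1 + 1))

/-- A polyomino: a finite nonempty set of cells, any two of which are joined by a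
path of adjacent cells inside the set. -/
def IsPolyomino (P : Finset Cell) : Prop :=
  P.Nonempty ∧ ∀ c ∈ P, ∀ d ∈ P,
    Relation.ReflTransGen (fun a b => Adjacent a b ∧ a ∈ P ∧ b ∈ P) c d

/-- A horizontal segment of consecutive cells in a row. -/
def IsHSeg (S : Finset Cell) : Prop :=
  ∃ y a b : ℤ, a ≤ b ∧ S = (Finset.Icc a b).image (fun x => (x, y))

/-- A vertical segment of consecutive cells in a column. -/
def IsVSeg (S : Finset Cell) : Prop :=
  ∃ x a b : ℤ, a ≤ b ∧ S = (Finset.Icc a b).image (fun y => (x, y))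

/-- A maximal horizontal cell interval of `P`. -/
def IsMaxHInterval (P I : Finset Cell) : Prop :=
  IsHSeg I ∧ I ⊆ P ∧ ∀ I', IsHSeg I' → I' ⊆ P → I ⊆ I' → I' = I

/-- A maximal vertical cell interval of `P`. -/
def IsMaxVInterval (P I : Finset Cell) : Prop :=
  IsVSeg I ∧ I ⊆ P ∧ ∀ I', IsVSeg I' → I' ⊆ P → I ⊆ I' → I' = I

/-- A maximal cell interval of `P`. -/
def IsMaxInterval (P I : Finset Cell) : Prop :=
  IsMaxHInterval P I ∨ IsMaxVInterval P I

/-- Two distinct cells of `P` attack each other if they lie in a common maximal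
cell interval of `P`. -/
def Attacks (P : Finset Cell) (c d : Cell) : Prop :=
  c ≠ d ∧ ∃ I, IsMaxInterval P I ∧ c ∈ I ∧ d ∈ I

/-- A set of pairwise non-attacking cells of `P` (a face of the rook complex). -/
def IsRookSet (P F : Finset Cell) : Prop :=
  F ⊆ P ∧ ∀ c ∈ F, ∀ d ∈ F, ¬ Attacks P c d

/-- A maximal set of pairwise non-attacking cells of `P` (a facet of the rook complex). -/
def IsMaxRookSet (P F : Finset Cell) : Prop :=
  IsRookSet P F ∧ ∀ G, IsRookSet P G → F ⊆ G → G = F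

/-- An interval `I` is embedded if some set `F` of pairwise non-attacking cells,
disjoint from `I`, attacks every cell of `I`. -/
def IsEmbedded (P I : Finset Cell) : Prop :=
  ∃ F : Finset Cell, IsRookSet P F ∧ F ∩ I = ∅ ∧ ∀ c ∈ I, ∃ f ∈ F, Attacks P f c

/-- A partition of `P`: pairwise disjoint maximal cell intervals whose union is `P`. -/
def IsPartition (P : Finset Cell) (A : Finset (Finset Cell)) : Prop :=
  (∀ I ∈ A, IsMaxInterval P I) ∧
  (∀ I ∈ A, ∀ J ∈ A, I ≠ J → Disjoint I J) ∧
  A.biUnion id = P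

/-- A super partition: a partition none of whose intervals is embedded. -/
def IsSuperPartition (P : Finset Cell) (A : Finset (Finset Cell)) : Prop :=
  IsPartition P A ∧ ∀ I ∈ A, ¬ IsEmbedded P I

/-- `P` is a square: a translate of the `n × n` block of cells for some `n ≥ 1`. -/
def IsSquareBlock (P : Finset Cell) : Prop :=
  ∃ a b n : ℤ, 1 ≤ n ∧ P = Finset.Icc a (a + n - 1) ×ˢ Finset.Icc b (b + n - 1)

/-- The graph `G_P` on the cells of `P` whose edges are the attacking pairs. -/
def GP (P : Finset Cell) : SimpleGraph {c : Cell // c ∈ P} where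
  Adj c d := Attacks P (c : Cell) (d : Cell)
  symm := ⟨by
    rintro c d ⟨hne, I, hI, hc, hd⟩
    exact ⟨hne.symm, I, hI, hd, hc⟩⟩
  loopless := ⟨by
    rintro c ⟨hne, -⟩
    exact hne rfl⟩

/-- The complement graph `Ḡ_P`. -/
def GBar (P : Finset Cell) : SimpleGraph {c : Cell // c ∈ P} := (GP P)ᶜ

/-- `G` has an induced cycle of length `n`: an injective map from `ZMod n`
whose image induces exactly the cycle adjacencies. -/
def HasInducedCycle {V : Type*} (G : SimpleGraph V) (n : ℕ) : Prop :=
  3 ≤ n ∧ ∃ f : ZMod n → V, Function.Injective f ∧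
    ∀ i j : ZMod n, G.Adj (f i) (f j) ↔ (i = j + 1 ∨ j = i + 1)

/-- A graph is chordal if it has no induced cycle of length at least 4. -/
def IsChordal {V : Type*} (G : SimpleGraph V) : Prop :=
  ∀ n, 4 ≤ n → ¬ HasInducedCycle G n

/-- `P` is simple: any two cells outside `P` are joined by a path of adjacent
cells outside `P`. -/
def IsSimple (P : Finset Cell) : Prop :=
  ∀ c d : Cell, c ∉ P → d ∉ P →
    Relation.ReflTransGen (fun a b => Adjacent a b ∧ a ∉ P ∧ b ∉ P) c d

/-- `P` is thin: it contains no four cells forming a `2 × 2` square. -/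
def IsThin (P : Finset Cell) : Prop :=
  ¬ ∃ a : Cell, ({a, (a.1 + 1, a.2), (a.1, a.2 + 1), (a.1 + 1, a.2 + 1)} : Finset Cell) ⊆ P

/-- A path of distinct cells of `P`, consecutive cells being adjacent. -/
def IsCellPath (P : Finset Cell) (l : List Cell) : Prop :=
  l.Nodup ∧ (∀ c ∈ l, c ∈ P) ∧ l.Chain' Adjacent

/-- The number of changes of direction of a path of cells: positions `k`
(with `1 ≤ k ≤ length - 2`) where the `(k-1)`-st and `(k+1)`-st cells differ
in both coordinates. -/
def dirChanges (l : List Cell) : ℕ :=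
  ((Finset.Ico 1 (l.length - 1)).filter (fun k =>
    (l.getD (k - 1) (0, 0)).1 ≠ (l.getD (k + 1) (0, 0)).1 ∧
    (l.getD (k - 1) (0, 0)).2 ≠ (l.getD (k + 1) (0, 0)).2)).card

/-- The eight rotations/reflections of the grid. -/
def dihedralMaps : List (Cell → Cell) :=
  [fun p => (p.1, p.2), fun p => (-p.2, p.1), fun p => (-p.1, -p.2), fun p => (p.2, -p.1),
   fun p => (p.2, p.1), fun p => (-p.1, p.2), fun p => (-p.2, -p.1), fun p => (p.1, -p.2)]

/-- `P` is obtained from `Q` by a translation, rotation or reflection of `ℤ²`. -/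
def CongruentTo (P Q : Finset Cell) : Prop :=
  ∃ g ∈ dihedralMaps, ∃ t : Cell, P = Q.image (fun p => g p + t)

/-- A brush polyomino with handle `J`. -/
def IsBrush (P J : Finset Cell) : Prop :=
  IsPolyomino P ∧ IsSimple P ∧ IsThin P ∧ IsMaxInterval P J ∧
  (∀ I, IsMaxInterval P I → 2 ≤ I.card → I ≠ J → (I ∩ J).Nonempty) ∧
  (∀ c ∈ P, c ∈ J ∨ ∃ I, IsMaxInterval P I ∧ 2 ≤ I.card ∧ c ∈ I)

/-- A short brush polyomino: a brush all of whose bristles have at most two cells. -/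
def IsShortBrush (P : Finset Cell) : Prop :=
  ∃ J, IsBrush P J ∧ ∀ I, IsMaxInterval P I → I ≠ J → I.card ≤ 2

/-- A pure brush polyomino: handle `J` of cardinality `d` together with `d`
pairwise disjoint bristles `I 0, …, I (d-1)` perpendicular to `J`, each meeting
`J`, whose union is `P`. -/
def IsPureBrush (P J : Finset Cell) (d : ℕ) (I : Fin d → Finset Cell) : Prop :=
  IsPolyomino P ∧ IsSimple P ∧ IsThin P ∧
  J.card = d ∧
  ((IsMaxHInterval P J ∧ ∀ k, IsMaxVInterval P (I k)) ∨
   (IsMaxVInterval P J ∧ ∀ k, IsMaxHInterval P (I k))) ∧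
  (∀ j k, j ≠ k → Disjoint (I j) (I k)) ∧
  (∀ k, ((I k) ∩ J).Nonempty) ∧
  Finset.univ.biUnion I = P

/-- The `k`-th elementary symmetric polynomial of `x 0, …, x (d-1)`. -/
def esymm {R : Type*} [CommRing R] {d : ℕ} (k : ℕ) (x : Fin d → R) : R :=
  ∑ s ∈ Finset.powersetCard k (Finset.univ : Finset (Fin d)), ∏ i ∈ s, x i

/-- `G_P` has an induced matching with `n` edges `{A i, B i}`. -/
def HasInducedMatching (P : Finset Cell) (n : ℕ) : Prop :=
  ∃ A B : Fin n → Cell,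
    (∀ i, Attacks P (A i) (B i)) ∧
    (∀ i j, i ≠ j → A i ≠ A j) ∧
    (∀ i j, i ≠ j → B i ≠ B j) ∧
    (∀ i j, A i ≠ B j) ∧
    (∀ i j, i ≠ j →
      ¬ Attacks P (A i) (A j) ∧ ¬ Attacks P (A i) (B j) ∧ ¬ Attacks P (B i) (B j))

/-- The induced matching number `ν(G_P)`. -/
noncomputable def matchNum (P : Finset Cell) : ℕ := sSup {n | HasInducedMatching P n}

/-- `c` is a single cell of the maximal interval `I`: the maximal interval of `P`
through `c` perpendicular to `I` is `{c}`. -/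
def IsSingleCell (P I : Finset Cell) (c : Cell) : Prop :=
  c ∈ I ∧
  ((IsMaxHInterval P I ∧ ∀ I', IsMaxVInterval P I' → c ∈ I' → I' = {c}) ∨
   (IsMaxVInterval P I ∧ ∀ I', IsMaxHInterval P I' → c ∈ I' → I' = {c}))

section Prelim

lemma adjacent_symm {u v : Cell} (h : Adjacent u v) : Adjacent v u := by
  rcases h with ⟨h1, h2⟩ | ⟨h1, h2⟩
  · exact Or.inl ⟨h1.symm, h2.symm⟩
  · exact Or.inr ⟨h1.symm, h2.symm⟩

lemma adj_shape {u v : Cell} (h : Adjacent u v) :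
    (v.1 = u.1 ∧ (v.2 = u.2 + 1 ∨ v.2 = u.2 - 1)) ∨
    (v.2 = u.2 ∧ (v.1 = u.1 + 1 ∨ v.1 = u.1 - 1)) := by
  rcases h with ⟨h1, h2⟩ | ⟨h1, h2⟩
  · exact Or.inl ⟨h1.symm, by omega⟩
  · exact Or.inr ⟨h1.symm, by omega⟩

lemma hseg_two {S : Finset Cell} (h : IsHSeg S) {p q : Cell} (hp : p ∈ S) (hq : q ∈ S) :
    p.2 = q.2 ∧ ∀ z : Cell, z.2 = p.2 → p.1 ≤ z.1 → z.1 ≤ q.1 → z ∈ S := by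
  obtain ⟨y, a, b, hab, hS⟩ := h
  subst hS
  rw [Finset.mem_image] at hp hq
  obtain ⟨x, hx, rfl⟩ := hp
  obtain ⟨x', hx', rfl⟩ := hq
  rw [Finset.mem_Icc] at hx hx'
  refine ⟨rfl, fun z hz2 hz1 hz1' => ?_⟩
  obtain ⟨z1, z2⟩ := z
  rw [Finset.mem_image]
  dsimp at hz1 hz1' hz2
  exact ⟨z1, by rw [Finset.mem_Icc]; omega, by rw [hz2]⟩

lemma vseg_two {S : Finset Cell} (h : IsVSeg S) {p q : Cell} (hp : p ∈ S) (hq : q ∈ S) :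
    p.1 = q.1 ∧ ∀ z : Cell, z.1 = p.1 → p.2 ≤ z.2 → z.2 ≤ q.2 → z ∈ S := by
  obtain ⟨x, a, b, hab, hS⟩ := h
  subst hS
  rw [Finset.mem_image] at hp hq
  obtain ⟨t, ht, rfl⟩ := hp
  obtain ⟨t', ht', rfl⟩ := hq
  rw [Finset.mem_Icc] at ht ht'
  refine ⟨rfl, fun z hz1 hz2 hz2' => ?_⟩
  obtain ⟨z1, z2⟩ := z
  rw [Finset.mem_image]
  dsimp at hz1 hz2 hz2'
  exact ⟨z2, by rw [Finset.mem_Icc]; omega, by rw [hz1]⟩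

lemma attacks_symm {P : Finset Cell} {u v : Cell} (h : Attacks P u v) : Attacks P v u := by
  obtain ⟨hne, I, hI, hu, hv⟩ := h
  exact ⟨hne.symm, I, hI, hv, hu⟩

lemma not_attacks_of_ne_ne {P : Finset Cell} {p q : Cell} (h1 : p.1 ≠ q.1) (h2 : p.2 ≠ q.2) :
    ¬ Attacks P p q := by
  rintro ⟨hne, I, hI, hp, hq⟩
  rcases hI with hH | hV
  · exact h2 (hseg_two hH.1 hp hq).1
  · exact h1 (vseg_two hV.1 hp hq).1

/-- If the two cells share a column and some non-`P` cell lies strictly between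
them in that column, they do not attack. -/
lemma not_attacks_col_block {P : Finset Cell} {p q z : Cell} (hcol : p.1 = q.1)
    (hz : z ∉ P) (hz1 : z.1 = p.1) (h2 : p.2 < z.2) (h3 : z.2 < q.2) :
    ¬ Attacks P p q := by
  rintro ⟨hne, I, hI, hp, hq⟩
  rcases hI with hH | hV
  · have := (hseg_two hH.1 hp hq).1
    omega
  · obtain ⟨-, hbet⟩ := vseg_two hV.1 hp hq
    exact hz (hV.2.1 (hbet z hz1 (by omega) (by omega)))

/-- If the two cells share a row and some non-`P` cell lies strictly between
them in that row, they do not attack. -/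
lemma not_attacks_row_block {P : Finset Cell} {p q z : Cell} (hrow : p.2 = q.2)
    (hz : z ∉ P) (hz2 : z.2 = p.2) (h2 : p.1 < z.1) (h3 : z.1 < q.1) :
    ¬ Attacks P p q := by
  rintro ⟨hne, I, hI, hp, hq⟩
  rcases hI with hH | hV
  · obtain ⟨-, hbet⟩ := hseg_two hH.1 hp hq
    exact hz (hH.2.1 (hbet z hz2 (by omega) (by omega)))
  · have := (vseg_two hV.1 hp hq).1
    omega

end Prelim

section MaxInt

/-- A bound on first/second coordinates of a finite set of cells. -/
lemma cell_bound (P : Finset Cell) : ∃ M : ℤ, 0 < M ∧ ∀ p ∈ P, p.1 < M ∧ -M < p.1 ∧ p.2 < M ∧ -M < p.2 := by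
  refine ⟨1 + (P.sup fun p => p.1.natAbs ⊔ p.2.natAbs : ℕ), by positivity, fun p hp => ?_⟩
  have h := Finset.le_sup (f := fun p : Cell => p.1.natAbs ⊔ p.2.natAbs) hp
  have h1 : p.1.natAbs ≤ (P.sup fun p => p.1.natAbs ⊔ p.2.natAbs : ℕ) := le_trans (le_max_left _ _) h
  have h2 : p.2.natAbs ≤ (P.sup fun p => p.1.natAbs ⊔ p.2.natAbs : ℕ) := le_trans (le_max_right _ _) h
  omega

lemma attacks_right {P : Finset Cell} {x y : ℤ}
    (h1 : ((x, y) : Cell) ∈ P) (h2 : ((x + 1, y) : Cell) ∈ P) :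
    Attacks P (x, y) (x + 1, y) := by
  obtain ⟨M, hM0, hM⟩ := cell_bound P
  -- greatest right end
  obtain ⟨B, hB, hBmax⟩ := Int.exists_greatest_of_bdd
    (P := fun t => x + 1 ≤ t ∧ ∀ s, x ≤ s → s ≤ t → ((s, y) : Cell) ∈ P)
    ⟨M, fun t ht => le_of_lt (hM _ (ht.2 t (by omega) le_rfl)).1⟩
    ⟨x + 1, le_rfl, fun s hs hs' => by
      rcases eq_or_lt_of_le hs' with h | h
      · exact h ▸ h2
      · have : s = x := by omega
        exact this ▸ h1⟩
  obtain ⟨A, hA, hAmin⟩ := Int.exists_least_of_bdd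
    (P := fun t => t ≤ x ∧ ∀ s, t ≤ s → s ≤ x + 1 → ((s, y) : Cell) ∈ P)
    ⟨-M, fun t ht => le_of_lt (hM _ (ht.2 t le_rfl (by omega))).2.1⟩
    ⟨x, le_rfl, fun s hs hs' => by
      rcases eq_or_lt_of_le hs with h | h
      · exact h ▸ h1
      · have : s = x + 1 := by omega
        exact this ▸ h2⟩
  have hAB : A ≤ B := by omega
  have hallP : ∀ s, A ≤ s → s ≤ B → ((s, y) : Cell) ∈ P := by
    intro s hs hs'
    rcases le_or_gt s x with h | h
    · exact hA.2 s hs (by omega)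
    · exact hB.2 s (by omega) hs'
  refine ⟨by simp, (Finset.Icc A B).image (fun t => ((t, y) : Cell)), Or.inl ⟨⟨y, A, B, hAB, rfl⟩, ?_, ?_⟩, ?_, ?_⟩
  · intro p hp
    rw [Finset.mem_image] at hp
    obtain ⟨t, ht, rfl⟩ := hp
    rw [Finset.mem_Icc] at ht
    exact hallP t ht.1 ht.2
  · rintro I' ⟨y', a', b', hab', rfl⟩ hsub' hsub
    have hmemA : ((A, y) : Cell) ∈ (Finset.Icc a' b').image (fun x => ((x, y') : Cell)) :=
      hsub (by rw [Finset.mem_image]; exact ⟨A, by rw [Finset.mem_Icc]; omega, rfl⟩)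
    have hmemB : ((B, y) : Cell) ∈ (Finset.Icc a' b').image (fun x => ((x, y') : Cell)) :=
      hsub (by rw [Finset.mem_image]; exact ⟨B, by rw [Finset.mem_Icc]; omega, rfl⟩)
    rw [Finset.mem_image] at hmemA hmemB
    obtain ⟨tA, htA, htA'⟩ := hmemA
    obtain ⟨tB, htB, htB'⟩ := hmemB
    rw [Finset.mem_Icc] at htA htB
    have hy' : y' = y := (congrArg Prod.snd htA')
    have htAA : tA = A := (congrArg Prod.fst htA')
    have htBB : tB = B := (congrArg Prod.fst htB')
    have hall' : ∀ s, a' ≤ s → s ≤ b' → ((s, y) : Cell) ∈ P := by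
      intro s hs hs'
      have := hsub' (by rw [Finset.mem_image]; exact ⟨s, by rw [Finset.mem_Icc]; omega, rfl⟩)
      rwa [hy'] at this
    have hb' : b' = B := by
      have : b' ≤ B := hBmax b' ⟨by omega, fun s hs hs' => hall' s (by omega) hs'⟩
      omega
    have ha' : a' = A := by
      have : A ≤ a' := hAmin a' ⟨by omega, fun s hs hs' => hall' s hs (by omega)⟩
      omega
    rw [ha', hb', hy']
  · rw [Finset.mem_image]; exact ⟨x, by rw [Finset.mem_Icc]; omega, rfl⟩
  · rw [Finset.mem_image]; exact ⟨x + 1, by rw [Finset.mem_Icc]; omega, rfl⟩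

lemma attacks_up {P : Finset Cell} {x y : ℤ}
    (h1 : ((x, y) : Cell) ∈ P) (h2 : ((x, y + 1) : Cell) ∈ P) :
    Attacks P (x, y) (x, y + 1) := by
  obtain ⟨M, hM0, hM⟩ := cell_bound P
  obtain ⟨B, hB, hBmax⟩ := Int.exists_greatest_of_bdd
    (P := fun t => y + 1 ≤ t ∧ ∀ s, y ≤ s → s ≤ t → ((x, s) : Cell) ∈ P)
    ⟨M, fun t ht => le_of_lt (hM _ (ht.2 t (by omega) le_rfl)).2.2.1⟩
    ⟨y + 1, le_rfl, fun s hs hs' => by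
      rcases eq_or_lt_of_le hs' with h | h
      · exact h ▸ h2
      · have : s = y := by omega
        exact this ▸ h1⟩
  obtain ⟨A, hA, hAmin⟩ := Int.exists_least_of_bdd
    (P := fun t => t ≤ y ∧ ∀ s, t ≤ s → s ≤ y + 1 → ((x, s) : Cell) ∈ P)
    ⟨-M, fun t ht => le_of_lt (hM _ (ht.2 t le_rfl (by omega))).2.2.2⟩
    ⟨y, le_rfl, fun s hs hs' => by
      rcases eq_or_lt_of_le hs with h | h
      · exact h ▸ h1
      · have : s = y + 1 := by omega
        exact this ▸ h2⟩
  have hAB : A ≤ B := by omega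
  have hallP : ∀ s, A ≤ s → s ≤ B → ((x, s) : Cell) ∈ P := by
    intro s hs hs'
    rcases le_or_gt s y with h | h
    · exact hA.2 s hs (by omega)
    · exact hB.2 s (by omega) hs'
  refine ⟨by simp, (Finset.Icc A B).image (fun t => ((x, t) : Cell)), Or.inr ⟨⟨x, A, B, hAB, rfl⟩, ?_, ?_⟩, ?_, ?_⟩
  · intro p hp
    rw [Finset.mem_image] at hp
    obtain ⟨t, ht, rfl⟩ := hp
    rw [Finset.mem_Icc] at ht
    exact hallP t ht.1 ht.2
  · rintro I' ⟨x', a', b', hab', rfl⟩ hsub' hsub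
    have hmemA : ((x, A) : Cell) ∈ (Finset.Icc a' b').image (fun t => ((x', t) : Cell)) :=
      hsub (by rw [Finset.mem_image]; exact ⟨A, by rw [Finset.mem_Icc]; omega, rfl⟩)
    have hmemB : ((x, B) : Cell) ∈ (Finset.Icc a' b').image (fun t => ((x', t) : Cell)) :=
      hsub (by rw [Finset.mem_image]; exact ⟨B, by rw [Finset.mem_Icc]; omega, rfl⟩)
    rw [Finset.mem_image] at hmemA hmemB
    obtain ⟨tA, htA, htA'⟩ := hmemA
    obtain ⟨tB, htB, htB'⟩ := hmemB
    rw [Finset.mem_Icc] at htA htB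
    have hx' : x' = x := (congrArg Prod.fst htA')
    have htAA : tA = A := (congrArg Prod.snd htA')
    have htBB : tB = B := (congrArg Prod.snd htB')
    have hall' : ∀ s, a' ≤ s → s ≤ b' → ((x, s) : Cell) ∈ P := by
      intro s hs hs'
      have := hsub' (by rw [Finset.mem_image]; exact ⟨s, by rw [Finset.mem_Icc]; omega, rfl⟩)
      rwa [hx'] at this
    have hb' : b' = B := by
      have : b' ≤ B := hBmax b' ⟨by omega, fun s hs hs' => hall' s (by omega) hs'⟩
      omega
    have ha' : a' = A := by
      have : A ≤ a' := hAmin a' ⟨by omega, fun s hs hs' => hall' s hs (by omega)⟩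
      omega
    rw [ha', hb', hx']
  · rw [Finset.mem_image]; exact ⟨y, by rw [Finset.mem_Icc]; omega, rfl⟩
  · rw [Finset.mem_image]; exact ⟨y + 1, by rw [Finset.mem_Icc]; omega, rfl⟩

/-- Any two adjacent cells of `P` attack each other. -/
lemma attacks_adj {P : Finset Cell} {u v : Cell} (hadj : Adjacent u v)
    (hu : u ∈ P) (hv : v ∈ P) : Attacks P u v := by
  obtain ⟨u1, u2⟩ := u
  obtain ⟨v1, v2⟩ := v
  rcases adj_shape hadj with ⟨h1, h2 | h2⟩ | ⟨h1, h2 | h2⟩ <;> dsimp at h1 h2 <;> subst h1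
  · rw [h2] at hv ⊢; exact attacks_up hu hv
  · have : u2 = v2 + 1 := by omega
    rw [this] at hu ⊢; exact attacks_symm (attacks_up hv hu)
  · rw [h2] at hv ⊢; exact attacks_right hu hv
  · have : u1 = v1 + 1 := by omega
    rw [this] at hu ⊢; exact attacks_symm (attacks_right hv hu)

end MaxInt

section C4


lemma zmod4_cases (i : ZMod 4) : i = 0 ∨ i = 1 ∨ i = 2 ∨ i = 3 := by
  revert i; decide

set_option maxHeartbeats 1600000 in
lemma no2K2 {P : Finset Cell} (hch : IsChordal (GBar P)) {a b c d : Cell}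
    (ha : a ∈ P) (hb : b ∈ P) (hc : c ∈ P) (hd : d ∈ P)
    (hab : Attacks P a b) (hcd : Attacks P c d)
    (hac : ¬ Attacks P a c) (nac : a ≠ c)
    (had : ¬ Attacks P a d) (nad : a ≠ d)
    (hbc : ¬ Attacks P b c) (nbc : b ≠ c)
    (hbd : ¬ Attacks P b d) (nbd : b ≠ d) : False := by
  apply hch 4 le_rfl
  have nab : a ≠ b := hab.1
  have hca : ¬ Attacks P c a := fun h => hac (attacks_symm h)
  have hda : ¬ Attacks P d a := fun h => had (attacks_symm h)
  have hcb : ¬ Attacks P c b := fun h => hbc (attacks_symm h)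
  have hdb : ¬ Attacks P d b := fun h => hbd (attacks_symm h)
  have nca : c ≠ a := nac.symm
  have nda : d ≠ a := nad.symm
  have ncb : c ≠ b := nbc.symm
  have ndb : d ≠ b := nbd.symm
  have ncd : c ≠ d := hcd.1
  have key : ∀ u v : Cell, ∀ hu : u ∈ P, ∀ hv : v ∈ P,
      (GBar P).Adj ⟨u, hu⟩ ⟨v, hv⟩ ↔ (u ≠ v ∧ ¬ Attacks P u v) := by
    intro u v hu hv
    rw [GBar, SimpleGraph.compl_adj]
    simp [GP, Subtype.mk.injEq]
  refine ⟨by norm_num, fun i => if i = 0 then ⟨a, ha⟩ else if i = 1 then ⟨c, hc⟩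
    else if i = 2 then ⟨b, hb⟩ else ⟨d, hd⟩, ?_, ?_⟩
  · intro i j hij
    rcases zmod4_cases i with rfl | rfl | rfl | rfl <;>
      rcases zmod4_cases j with rfl | rfl | rfl | rfl <;>
      simp (config := { decide := true }) only [ite_true, ite_false, Subtype.mk.injEq] at hij <;>
      first
        | rfl
        | (exact absurd hij (by assumption))
        | (exact absurd hij.symm (by assumption))
  · intro i j
    rcases zmod4_cases i with rfl | rfl | rfl | rfl <;>
      rcases zmod4_cases j with rfl | rfl | rfl | rfl <;>
      simp (config := { decide := true }) only [ite_true, ite_false, key] <;>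
      first
        | (simp (config := { decide := true }); done)
        | (exact iff_of_true (by tauto) (by decide))
        | (refine iff_of_false (fun h => ?_) (by decide);
           first
             | exact h.2 hab
             | exact h.2 hcd
             | exact h.2 (attacks_symm hab)
             | exact h.2 (attacks_symm hcd)
             | exact h.1 rfl)

end C4

section Paths

/-- The relation of adjacency outside `P`. -/
def OutRel (P : Finset Cell) (a b : Cell) : Prop := Adjacent a b ∧ a ∉ P ∧ b ∉ P

lemma outrel_symm {P : Finset Cell} : Symmetric (OutRel P) := by
  rintro u v ⟨h1, h2, h3⟩
  exact ⟨adjacent_symm h1, h3, h2⟩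

lemma rtg_symm {P : Finset Cell} {u v : Cell}
    (h : Relation.ReflTransGen (OutRel P) u v) : Relation.ReflTransGen (OutRel P) v u :=
  (@Relation.ReflTransGen.stdSymm _ (OutRel P) ⟨fun a b hab => outrel_symm hab⟩).symm _ _ h

lemma pathH_aux {P : Finset Cell} (y : ℤ) : ∀ n : ℕ, ∀ a b : ℤ, b - a = n →
    (∀ t, a ≤ t → t ≤ b → ((t, y) : Cell) ∉ P) →
    Relation.ReflTransGen (OutRel P) (a, y) (b, y) := by
  intro n
  induction n with
  | zero =>
    intro a b hab _
    have hab' : a = b := by omega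
    subst hab'
    exact .refl
  | succ k ih =>
    intro a b hab h
    have h1 : Relation.ReflTransGen (OutRel P) (a, y) (b - 1, y) :=
      ih a (b - 1) (by omega) (fun t ht ht' => h t ht (by omega))
    refine h1.tail ⟨Or.inr ⟨rfl, Or.inr (by omega)⟩, h (b-1) (by omega) (by omega), h b (by omega) (by omega)⟩

lemma pathH {P : Finset Cell} {y a b : ℤ}
    (h : ∀ t, min a b ≤ t → t ≤ max a b → ((t, y) : Cell) ∉ P) :
    Relation.ReflTransGen (OutRel P) (a, y) (b, y) := by
  rcases le_total a b with hab | hab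
  · exact pathH_aux y (b - a).toNat a b (by omega) (fun t ht ht' => h t (by omega) (by omega))
  · exact rtg_symm (pathH_aux y (a - b).toNat b a (by omega) (fun t ht ht' => h t (by omega) (by omega)))

lemma pathV_aux {P : Finset Cell} (x : ℤ) : ∀ n : ℕ, ∀ a b : ℤ, b - a = n →
    (∀ t, a ≤ t → t ≤ b → ((x, t) : Cell) ∉ P) →
    Relation.ReflTransGen (OutRel P) (x, a) (x, b) := by
  intro n
  induction n with
  | zero =>
    intro a b hab _
    have hab' : a = b := by omega
    subst hab'
    exact .refl
  | succ k ih =>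
    intro a b hab h
    have h1 : Relation.ReflTransGen (OutRel P) (x, a) (x, b - 1) :=
      ih a (b - 1) (by omega) (fun t ht ht' => h t ht (by omega))
    refine h1.tail ⟨Or.inl ⟨rfl, Or.inr (by omega)⟩, h (b-1) (by omega) (by omega), h b (by omega) (by omega)⟩

lemma pathV {P : Finset Cell} {x a b : ℤ}
    (h : ∀ t, min a b ≤ t → t ≤ max a b → ((x, t) : Cell) ∉ P) :
    Relation.ReflTransGen (OutRel P) (x, a) (x, b) := by
  rcases le_total a b with hab | hab
  · exact pathV_aux x (b - a).toNat a b (by omega) (fun t ht ht' => h t (by omega) (by omega))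
  · exact rtg_symm (pathV_aux x (a - b).toNat b a (by omega) (fun t ht ht' => h t (by omega) (by omega)))

/-- Every cell outside the bounding box of `P` is connected (outside `P`) to the
deep-south cell `(0, -M)`. -/
lemma out_conn {P : Finset Cell} {M : ℤ} (hM0 : 0 < M)
    (hM : ∀ p ∈ P, p.1 < M ∧ -M < p.1 ∧ p.2 < M ∧ -M < p.2) (z : Cell)
    (hz : M ≤ z.1 ∨ z.1 ≤ -M ∨ M ≤ z.2 ∨ z.2 ≤ -M) :
    Relation.ReflTransGen (OutRel P) z ((0, -M) : Cell) := by
  obtain ⟨z1, z2⟩ := z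
  dsimp at hz
  have hrowfree : ∀ y : ℤ, (M ≤ y ∨ y ≤ -M) → ∀ t : ℤ, ((t, y) : Cell) ∉ P := by
    intro y hy t hmem
    have := hM _ hmem
    dsimp at this
    omega
  have hcolfree : ∀ x : ℤ, (M ≤ x ∨ x ≤ -M) → ∀ t : ℤ, ((x, t) : Cell) ∉ P := by
    intro x hx t hmem
    have := hM _ hmem
    dsimp at this
    omega
  rcases hz with h | h | h | h
  · exact (pathV (a := z2) (b := -M) (fun t _ _ => hcolfree z1 (Or.inl h) t)).trans
      (pathH (a := z1) (b := 0) (fun t _ _ => hrowfree (-M) (Or.inr le_rfl) t))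
  · exact (pathV (a := z2) (b := -M) (fun t _ _ => hcolfree z1 (Or.inr h) t)).trans
      (pathH (a := z1) (b := 0) (fun t _ _ => hrowfree (-M) (Or.inr le_rfl) t))
  · exact ((pathH (a := z1) (b := M) (fun t _ _ => hrowfree z2 (Or.inl h) t)).trans
      (pathV (a := z2) (b := -M) (fun t _ _ => hcolfree M (Or.inl le_rfl) t))).trans
      (pathH (a := M) (b := 0) (fun t _ _ => hrowfree (-M) (Or.inr le_rfl) t))
  · exact ((pathH (a := z1) (b := M) (fun t _ _ => hrowfree z2 (Or.inr h) t)).trans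
      (pathV (a := z2) (b := -M) (fun t _ _ => hcolfree M (Or.inl le_rfl) t))).trans
      (pathH (a := M) (b := 0) (fun t _ _ => hrowfree (-M) (Or.inr le_rfl) t))

/-- Along a path, the first coordinate takes every intermediate value. -/
lemma rtg_intermediate {R : Cell → Cell → Prop}
    (hR : ∀ a b, R a b → Adjacent a b) (f : Cell → ℤ)
    (hf : ∀ a b : Cell, Adjacent a b → f b ≤ f a + 1)
    {u v : Cell} (h : Relation.ReflTransGen R u v) :
    ∀ c : ℤ, f u ≤ c → c ≤ f v → ∃ z : Cell, Relation.ReflTransGen R u z ∧ f z = c := by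
  induction h with
  | refl => intro c h1 h2; exact ⟨u, .refl, by omega⟩
  | @tail b w hb hstep ih =>
    intro c h1 h2
    rcases le_or_gt c (f b) with h3 | h3
    · exact ih c h1 h3
    · have : f w ≤ f b + 1 := hf _ _ (hR _ _ hstep)
      have : c = f w := by omega
      exact ⟨w, hb.tail hstep, this.symm⟩

lemma adj_fst_le {a b : Cell} (h : Adjacent a b) : b.1 ≤ a.1 + 1 := by
  rcases adj_shape h with ⟨h1, _⟩ | ⟨_, h2⟩ <;> omega

lemma adj_snd_le {a b : Cell} (h : Adjacent a b) : b.2 ≤ a.2 + 1 := by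
  rcases adj_shape h with ⟨_, h2⟩ | ⟨h1, _⟩ <;> omega

end Paths

section MainAux

lemma adjacent_of (p q : Cell)
    (h : (p.1 = q.1 ∧ (p.2 = q.2 + 1 ∨ q.2 = p.2 + 1)) ∨
         (p.2 = q.2 ∧ (p.1 = q.1 + 1 ∨ q.1 = p.1 + 1))) : Adjacent p q := h

lemma ne_of_snd {p q : Cell} (h : p.2 ≠ q.2) : p ≠ q := fun hh => h (congrArg Prod.snd hh)
lemma ne_of_fst {p q : Cell} (h : p.1 ≠ q.1) : p ≠ q := fun hh => h (congrArg Prod.fst hh)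

lemma cell_eq {v : Cell} {a b : ℤ} (h1 : v.1 = a) (h2 : v.2 = b) : v = ((a, b) : Cell) :=
  Prod.ext h1 h2

lemma partner_shape' {a b : ℤ} {v : Cell} (h : Adjacent ((a, b) : Cell) v) :
    (v.1 = a ∧ v.2 = b + 1) ∨ (v.1 = a ∧ v.2 = b - 1) ∨
    (v.2 = b ∧ v.1 = a + 1) ∨ (v.2 = b ∧ v.1 = a - 1) := by
  rcases adj_shape h with ⟨h1, h2⟩ | ⟨h1, h2⟩ <;> dsimp at h1 h2 <;> omega

lemma ATV {P : Finset Cell} {x y y' : ℤ} (h : y' = y + 1)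
    (h1 : ((x, y) : Cell) ∈ P) (h2 : ((x, y') : Cell) ∈ P) :
    Attacks P (x, y) (x, y') := by subst h; exact attacks_up h1 h2

lemma ATH {P : Finset Cell} {x x' y : ℤ} (h : x' = x + 1)
    (h1 : ((x, y) : Cell) ∈ P) (h2 : ((x', y) : Cell) ∈ P) :
    Attacks P (x, y) (x', y) := by subst h; exact attacks_right h1 h2

end MainAux


/-- If `Ḡ_P` is chordal, then `P` is simple. -/
theorem statement9 (P : Finset Cell) (hP : IsPolyomino P)
    (hch : IsChordal (GBar P)) : IsSimple P := by
  classical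
  intro c0 d0 hc0 hd0
  by_contra hnot
  obtain ⟨M, hM0, hM⟩ := cell_bound P
  have hkey : ∃ h0 : Cell, h0 ∉ P ∧ ¬ Relation.ReflTransGen (OutRel P) h0 (((0 : ℤ), -M) : Cell) := by
    by_cases h1 : Relation.ReflTransGen (OutRel P) c0 (((0 : ℤ), -M) : Cell)
    · by_cases h2 : Relation.ReflTransGen (OutRel P) d0 (((0 : ℤ), -M) : Cell)
      · exact absurd (h1.trans (rtg_symm h2)) hnot
      · exact ⟨d0, hd0, h2⟩
    · exact ⟨c0, hc0, h1⟩
  obtain ⟨h0, hh0P, hh0trap⟩ := hkey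
  set comp : Cell → Prop := fun z => Relation.ReflTransGen (OutRel P) h0 z with hcompdef
  have hcompbox : ∀ z, comp z → -M < z.1 ∧ z.1 < M ∧ -M < z.2 ∧ z.2 < M := by
    intro z hz
    by_contra hbox
    push_neg at hbox
    exact hh0trap (hz.trans (out_conn hM0 hM z (by omega)))
  have hcompP : ∀ z, comp z → z ∉ P := by
    intro z hz
    induction hz with
    | refl => exact hh0P
    | tail _ hstep _ => exact hstep.2.2
  have hclose : ∀ z w, comp z → Adjacent z w → w ∉ P → comp w :=
    fun z w hz hadj hw => hz.tail ⟨hadj, hcompP z hz, hw⟩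
  have nbrP : ∀ z w : Cell, comp z → Adjacent z w → ¬ comp w → w ∈ P := by
    intro z w hz hadj hw
    by_contra h
    exact hw (hclose z w hz hadj h)
  -- the hole as a finset
  let S : Finset Cell := (Finset.Icc (-M) M ×ˢ Finset.Icc (-M) M).filter comp
  have hmemS : ∀ z : Cell, z ∈ S ↔ comp z := by
    intro z
    simp only [S, Finset.mem_filter, Finset.mem_product, Finset.mem_Icc, and_iff_right_iff_imp]
    intro hz
    have := hcompbox z hz
    omega
  have hSne : S.Nonempty := ⟨h0, (hmemS h0).2 .refl⟩
  -- extremal rows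
  obtain ⟨zt, hztS, hztmax⟩ := S.exists_max_image Prod.snd hSne
  obtain ⟨zb, hzbS, hzbmin⟩ := S.exists_min_image Prod.snd hSne
  obtain ⟨zl, hzlS, hzlmin⟩ := S.exists_min_image Prod.fst hSne
  obtain ⟨zr, hzrS, hzrmax⟩ := S.exists_max_image Prod.fst hSne
  obtain ⟨t, htS, htmax⟩ := (S.filter (fun z => z.2 = zt.2)).exists_max_image Prod.fst
    ⟨zt, Finset.mem_filter.2 ⟨hztS, rfl⟩⟩
  obtain ⟨bb, hbS, hbmin⟩ := (S.filter (fun z => z.2 = zb.2)).exists_min_image Prod.fst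
    ⟨zb, Finset.mem_filter.2 ⟨hzbS, rfl⟩⟩
  rw [Finset.mem_filter] at htS hbS
  obtain ⟨htS, htrow⟩ := htS
  obtain ⟨hbS, hbrow⟩ := hbS
  set Yv := zt.2 with hYv
  set mv := zb.2 with hmv
  set xlo := zl.1 with hxlo
  set xhi := zr.1 with hxhi
  set tx := t.1 with htx
  set bx := bb.1 with hbx
  have hbounds : ∀ z, comp z → mv ≤ z.2 ∧ z.2 ≤ Yv ∧ xlo ≤ z.1 ∧ z.1 ≤ xhi := by
    intro z hz
    have hzS := (hmemS z).2 hz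
    exact ⟨hzbmin z hzS, hztmax z hzS, hzlmin z hzS, hzrmax z hzS⟩
  have htcomp : comp (tx, Yv) := by
    have ht' : t = ((tx, Yv) : Cell) := by rw [htx, ← htrow]
    rw [← ht']; exact (hmemS t).1 htS
  have hbcomp : comp (bx, mv) := by
    have hb' : bb = ((bx, mv) : Cell) := by rw [hbx, ← hbrow]
    rw [← hb']; exact (hmemS bb).1 hbS
  have htopmax : ∀ z, comp z → z.2 = Yv → z.1 ≤ tx := by
    intro z hz hz2
    exact htmax z (Finset.mem_filter.2 ⟨(hmemS z).2 hz, by rw [hz2, hYv]⟩)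
  have hbotmin : ∀ z, comp z → z.2 = mv → bx ≤ z.1 := by
    intro z hz hz2
    exact hbmin z (Finset.mem_filter.2 ⟨(hmemS z).2 hz, by rw [hz2, hmv]⟩)
  have hmY : mv ≤ Yv := (hbounds _ htcomp).1
  have hxx : xlo ≤ xhi := (hbounds _ htcomp).2.2.1.trans (hbounds _ htcomp).2.2.2
  have htxB : xlo ≤ tx ∧ tx ≤ xhi := ⟨(hbounds _ htcomp).2.2.1, (hbounds _ htcomp).2.2.2⟩
  have hbxB : xlo ≤ bx ∧ bx ≤ xhi := ⟨(hbounds _ hbcomp).2.2.1, (hbounds _ hbcomp).2.2.2⟩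
  -- cells of the hole are not in P; neighbours beyond extremes are in P
  have hPn : ∀ z w : Cell, comp z → Adjacent z w →
      (Yv < w.2 ∨ w.2 < mv ∨ w.1 < xlo ∨ xhi < w.1) → w ∈ P := by
    intro z w hz hadj hout
    refine nbrP z w hz hadj (fun hw => ?_)
    have := hbounds w hw
    omega
  -- intermediate value lemmas
  have hcolint : ∀ cc : ℤ, xlo ≤ cc → cc ≤ xhi → ∃ z : Cell, comp z ∧ z.1 = cc := by
    intro cc h1 h2
    have hzl : comp zl := (hmemS zl).1 hzlS
    have hzr : comp zr := (hmemS zr).1 hzrS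
    have hpath : Relation.ReflTransGen (OutRel P) zl zr := (rtg_symm hzl).trans hzr
    obtain ⟨z, hz, hz1⟩ := rtg_intermediate (fun a b h => h.1) Prod.fst
      (fun a b h => adj_fst_le h) hpath cc h1 h2
    exact ⟨z, hzl.trans hz, hz1⟩
  have hrowint : ∀ r : ℤ, mv ≤ r → r ≤ Yv → ∃ z : Cell, comp z ∧ z.2 = r := by
    intro r h1 h2
    have hzb : comp zb := (hmemS zb).1 hzbS
    have hzt : comp zt := (hmemS zt).1 hztS
    have hpath : Relation.ReflTransGen (OutRel P) zb zt := (rtg_symm hzb).trans hzt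
    obtain ⟨z, hz, hz1⟩ := rtg_intermediate (fun a b h => h.1) Prod.snd
      (fun a b h => adj_snd_le h) hpath r h1 h2
    exact ⟨z, hzb.trans hz, hz1⟩
  -- cross-pair helpers
  have EZ : ∀ p q : Cell, p.1 ≠ q.1 → p.2 ≠ q.2 → (¬ Attacks P p q ∧ p ≠ q) :=
    fun p q h1 h2 => ⟨not_attacks_of_ne_ne h1 h2, ne_of_fst h1⟩
  have TB : ∀ p q : Cell, Yv < p.2 → q.2 < mv → (p.1 = q.1 → xlo ≤ p.1 ∧ p.1 ≤ xhi) →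
      (¬ Attacks P p q ∧ p ≠ q) := by
    intro p q hp hq hcond
    by_cases hcol : p.1 = q.1
    · obtain ⟨hc1, hc2⟩ := hcond hcol
      obtain ⟨z, hzcomp, hz1⟩ := hcolint p.1 hc1 hc2
      have hzb := hbounds z hzcomp
      refine ⟨fun hA => not_attacks_col_block hcol.symm (hcompP z hzcomp)
        (by omega) (by omega) (by omega) (attacks_symm hA), ne_of_snd (by omega)⟩
    · exact ⟨not_attacks_of_ne_ne hcol (by omega), ne_of_fst hcol⟩
  have BLK : ∀ p q z : Cell, p.1 = q.1 → z ∉ P → z.1 = p.1 → q.2 < z.2 → z.2 < p.2 →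
      (¬ Attacks P p q ∧ p ≠ q) := by
    intro p q z h1 h2 h3 h4 h5
    exact ⟨fun hA => not_attacks_col_block h1.symm h2 (by omega) h4 h5 (attacks_symm hA),
      ne_of_snd (by omega)⟩
  have FIN : ∀ a b c d : Cell, a ∈ P → b ∈ P → c ∈ P → d ∈ P →
      Attacks P a b → Attacks P c d →
      (¬Attacks P a c ∧ a ≠ c) → (¬Attacks P a d ∧ a ≠ d) →
      (¬Attacks P b c ∧ b ≠ c) → (¬Attacks P b d ∧ b ≠ d) → False :=
    fun a b c d ha hb hc hd h1 h2 p1 p2 p3 p4 =>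
      no2K2 hch ha hb hc hd h1 h2 p1.1 p1.2 p2.1 p2.2 p3.1 p3.2 p4.1 p4.2
  -- the two base cells above / below the hole
  have hu : ((tx, Yv + 1) : Cell) ∈ P :=
    hPn _ _ htcomp (adjacent_of _ _ (by norm_num)) (by norm_num)
  have hq : ((bx, mv - 1) : Cell) ∈ P :=
    hPn _ _ hbcomp (adjacent_of _ _ (by norm_num)) (by norm_num)
  -- every cell of P has a neighbour in P
  have partner : ∀ u : Cell, u ∈ P → ∃ v : Cell, v ∈ P ∧ Adjacent u v := by
    intro u huP
    have hPtwo : ∃ q : Cell, q ∈ P ∧ q ≠ u := by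
      by_cases h : u = ((tx, Yv + 1) : Cell)
      · exact ⟨(bx, mv - 1), hq, by rw [h]; exact ne_of_snd (by norm_num; omega)⟩
      · exact ⟨(tx, Yv + 1), hu, fun hh => h hh.symm⟩
    obtain ⟨q0, hq0, hne⟩ := hPtwo
    have hpath := hP.2 u huP q0 hq0
    rcases (Relation.ReflTransGen.cases_head hpath) with heq | ⟨w, hw, -⟩
    · exact absurd heq.symm hne
    · exact ⟨w, hw.2.2, hw.1⟩
  have TB2 : ∀ p1 p2 q1 q2 : ℤ, Yv < p2 → q2 < mv → (p1 = q1 → xlo ≤ p1 ∧ p1 ≤ xhi) →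
      (¬ Attacks P (p1, p2) (q1, q2) ∧ ((p1, p2) : Cell) ≠ (q1, q2)) :=
    fun p1 p2 q1 q2 h1 h2 h3 => TB (p1, p2) (q1, q2) h1 h2 h3
  have EZ2 : ∀ p1 p2 q1 q2 : ℤ, p1 ≠ q1 → p2 ≠ q2 →
      (¬ Attacks P (p1, p2) (q1, q2) ∧ ((p1, p2) : Cell) ≠ (q1, q2)) :=
    fun p1 p2 q1 q2 h1 h2 => EZ (p1, p2) (q1, q2) h1 h2
  have BLK2 : ∀ p1 p2 q2 z2 : ℤ, ((p1, z2) : Cell) ∉ P → q2 < z2 → z2 < p2 →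
      (¬ Attacks P (p1, p2) (p1, q2) ∧ ((p1, p2) : Cell) ≠ (p1, q2)) :=
    fun p1 p2 q2 z2 hz h4 h5 => BLK (p1, p2) (p1, q2) (p1, z2) rfl hz rfl h4 h5
  have hthole : ((tx, Yv) : Cell) ∉ P := hcompP _ htcomp
  have hbhole : ((bx, mv) : Cell) ∉ P := hcompP _ hbcomp
  by_cases hA1 : ((tx, Yv + 2) : Cell) ∈ P
  · -- A is the vertical pair above the top cell
    obtain ⟨v, hvP, hvadj⟩ := partner _ hq
    have hvf : v.2 < mv ∧ bx - 1 ≤ v.1 ∧ v.1 ≤ bx + 1 := by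
      have hvne : ¬(v.1 = bx ∧ v.2 = mv) := fun h => hbhole ((cell_eq h.1 h.2) ▸ hvP)
      have hsh := partner_shape' hvadj
      omega
    exact FIN (tx, Yv+1) (tx, Yv+2) (bx, mv-1) v hu hA1 hq hvP
      (ATV (by omega) hu hA1)
      (attacks_adj hvadj hq hvP)
      (TB2 tx (Yv+1) bx (mv-1) (by omega) (by omega) (by omega))
      (TB2 tx (Yv+1) v.1 v.2 (by omega) (by omega) (by omega))
      (TB2 tx (Yv+2) bx (mv-1) (by omega) (by omega) (by omega))
      (TB2 tx (Yv+2) v.1 v.2 (by omega) (by omega) (by omega))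
  by_cases hB1 : ((bx, mv - 2) : Cell) ∈ P
  · -- B is the vertical pair below the bottom cell
    obtain ⟨w, hwP, hwadj⟩ := partner _ hu
    have hwf : Yv < w.2 ∧ tx - 1 ≤ w.1 ∧ w.1 ≤ tx + 1 := by
      have hwne : ¬(w.1 = tx ∧ w.2 = Yv) := fun h => hthole ((cell_eq h.1 h.2) ▸ hwP)
      have hsh := partner_shape' hwadj
      omega
    exact FIN (tx, Yv+1) w (bx, mv-2) (bx, mv-1) hu hwP hB1 hq
      (attacks_adj hwadj hu hwP)
      (ATV (by omega) hB1 hq)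
      (TB2 tx (Yv+1) bx (mv-2) (by omega) (by omega) (by omega))
      (TB2 tx (Yv+1) bx (mv-1) (by omega) (by omega) (by omega))
      (TB2 w.1 w.2 bx (mv-2) (by omega) (by omega) (by omega))
      (TB2 w.1 w.2 bx (mv-1) (by omega) (by omega) (by omega))
  -- now neither vertical extension exists
  have hA23 : ((tx+1, Yv+1) : Cell) ∈ P ∨ ((tx-1, Yv+1) : Cell) ∈ P := by
    obtain ⟨w, hwP, hwadj⟩ := partner _ hu
    rcases partner_shape' hwadj with ⟨e1, e2⟩ | ⟨e1, e2⟩ | ⟨e1, e2⟩ | ⟨e1, e2⟩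
    · exact absurd ((cell_eq e1 (show w.2 = Yv + 2 by omega)) ▸ hwP) hA1
    · exact absurd ((cell_eq e1 (show w.2 = Yv by omega)) ▸ hwP) hthole
    · exact Or.inl ((cell_eq e2 e1) ▸ hwP)
    · exact Or.inr ((cell_eq e2 e1) ▸ hwP)
  have hB23 : ((bx-1, mv-1) : Cell) ∈ P ∨ ((bx+1, mv-1) : Cell) ∈ P := by
    obtain ⟨w, hwP, hwadj⟩ := partner _ hq
    rcases partner_shape' hwadj with ⟨e1, e2⟩ | ⟨e1, e2⟩ | ⟨e1, e2⟩ | ⟨e1, e2⟩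
    · exact absurd ((cell_eq e1 (show w.2 = mv by omega)) ▸ hwP) hbhole
    · exact absurd ((cell_eq e1 (show w.2 = mv - 2 by omega)) ▸ hwP) hB1
    · exact Or.inr ((cell_eq e2 e1) ▸ hwP)
    · exact Or.inl ((cell_eq e2 e1) ▸ hwP)
  by_cases hA2 : ((tx + 1, Yv + 1) : Cell) ∈ P
  · by_cases hB2 : ((bx - 1, mv - 1) : Cell) ∈ P
    · -- A right, B left : always safe
      exact FIN (tx, Yv+1) (tx+1, Yv+1) (bx-1, mv-1) (bx, mv-1) hu hA2 hB2 hq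
        (ATH (by omega) hu hA2) (ATH (by omega) hB2 hq)
        (TB2 tx (Yv+1) (bx-1) (mv-1) (by omega) (by omega) (by omega))
        (TB2 tx (Yv+1) bx (mv-1) (by omega) (by omega) (by omega))
        (TB2 (tx+1) (Yv+1) (bx-1) (mv-1) (by omega) (by omega) (by omega))
        (TB2 (tx+1) (Yv+1) bx (mv-1) (by omega) (by omega) (by omega))
    · -- A right, B right
      have hB3 : ((bx+1, mv-1) : Cell) ∈ P := hB23.resolve_left hB2
      by_cases hcorn : tx = xhi ∧ bx = xhi
      · -- harmful corner on the right
        obtain ⟨hc1, hc2⟩ := hcorn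
        rw [hc1] at hu hA2 hthole htcomp hA1
        rw [hc2] at hq hB3 hbhole hbcomp hB1 hB2
        by_cases hblk : ∃ r : ℤ, mv - 1 < r ∧ r < Yv + 1 ∧ ((xhi + 1, r) : Cell) ∉ P
        · obtain ⟨r, hr1, hr2, hrP⟩ := hblk
          exact FIN (xhi, Yv+1) (xhi+1, Yv+1) (xhi, mv-1) (xhi+1, mv-1) hu hA2 hq hB3
            (ATH (by omega) hu hA2) (ATH (by omega) hq hB3)
            (TB2 xhi (Yv+1) xhi (mv-1) (by omega) (by omega) (by omega))
            (EZ2 xhi (Yv+1) (xhi+1) (mv-1) (by omega) (by omega))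
            (EZ2 (xhi+1) (Yv+1) xhi (mv-1) (by omega) (by omega))
            (BLK2 (xhi+1) (Yv+1) (mv-1) r hrP hr1 hr2)
        · push_neg at hblk
          by_cases hR12 : ∃ z : Cell, comp z ∧ z.2 = Yv ∧ z.1 < xhi
          · obtain ⟨z, hzc, hz2, hz1⟩ := hR12
            obtain ⟨z1, z2⟩ := z
            dsimp only at hz1 hz2
            subst hz2
            have hzB := hbounds _ hzc
            dsimp only at hzB
            have hu' : ((z1, Yv + 1) : Cell) ∈ P :=
              hPn _ _ hzc (adjacent_of _ _ (by dsimp only; omega)) (by dsimp only; omega)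
            obtain ⟨v, hvP, hvadj⟩ := partner _ hu'
            have hvf : Yv < v.2 ∧ z1 - 1 ≤ v.1 ∧ v.1 ≤ z1 + 1 := by
              have hvne : ¬(v.1 = z1 ∧ v.2 = Yv) :=
                fun h => (hcompP _ hzc) ((cell_eq h.1 h.2) ▸ hvP)
              have hsh := partner_shape' hvadj
              omega
            exact FIN (z1, Yv+1) v (xhi, mv-1) (xhi+1, mv-1) hu' hvP hq hB3
              (attacks_adj hvadj hu' hvP) (ATH (by omega) hq hB3)
              (TB2 z1 (Yv+1) xhi (mv-1) (by omega) (by omega) (by omega))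
              (TB2 z1 (Yv+1) (xhi+1) (mv-1) (by omega) (by omega) (by omega))
              (TB2 v.1 v.2 xhi (mv-1) (by omega) (by omega) (by omega))
              (TB2 v.1 v.2 (xhi+1) (mv-1) (by omega) (by omega) (by omega))
          · push_neg at hR12
            by_cases hXlo : xlo = xhi
            · -- the hole is a single column
              have hcolseg : ∀ r : ℤ, mv ≤ r → r ≤ Yv → comp ((xhi, r) : Cell) := by
                intro r h1 h2
                obtain ⟨z, hzc, hz2⟩ := hrowint r h1 h2
                have hzB := hbounds _ hzc
                have hzeq : z = ((xhi, r) : Cell) := cell_eq (by omega) hz2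
                rwa [hzeq] at hzc
              have hleft : ∀ r : ℤ, mv ≤ r → r ≤ Yv → ((xhi - 1, r) : Cell) ∈ P := by
                intro r h1 h2
                exact hPn _ _ (hcolseg r h1 h2)
                  (adjacent_of _ _ (by dsimp only; omega)) (by dsimp only; omega)
              by_cases hmY2 : mv < Yv
              · exact FIN (xhi-1, Yv-1) (xhi-1, Yv) (xhi, mv-1) (xhi+1, mv-1)
                  (hleft (Yv-1) (by omega) (by omega)) (hleft Yv (by omega) (by omega)) hq hB3
                  (ATV (by omega) (hleft (Yv-1) (by omega) (by omega)) (hleft Yv (by omega) (by omega)))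
                  (ATH (by omega) hq hB3)
                  (EZ2 (xhi-1) (Yv-1) xhi (mv-1) (by omega) (by omega))
                  (EZ2 (xhi-1) (Yv-1) (xhi+1) (mv-1) (by omega) (by omega))
                  (EZ2 (xhi-1) Yv xhi (mv-1) (by omega) (by omega))
                  (EZ2 (xhi-1) Yv (xhi+1) (mv-1) (by omega) (by omega))
              · -- single cell hole
                have hmveq : mv = Yv := by omega
                by_cases hAL : ((xhi - 1, Yv + 1) : Cell) ∈ P
                · exact FIN (xhi-1, Yv+1) (xhi, Yv+1) (xhi, mv-1) (xhi+1, mv-1) hAL hu hq hB3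
                    (ATH (by omega) hAL hu) (ATH (by omega) hq hB3)
                    (EZ2 (xhi-1) (Yv+1) xhi (mv-1) (by omega) (by omega))
                    (EZ2 (xhi-1) (Yv+1) (xhi+1) (mv-1) (by omega) (by omega))
                    (TB2 xhi (Yv+1) xhi (mv-1) (by omega) (by omega) (by omega))
                    (EZ2 xhi (Yv+1) (xhi+1) (mv-1) (by omega) (by omega))
                · have hL : ((xhi - 1, Yv) : Cell) ∈ P := hleft Yv (by omega) le_rfl
                  obtain ⟨w, hwP, hwadj⟩ := partner _ hL
                  have hw : w = ((xhi - 2, Yv) : Cell) := by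
                    rcases partner_shape' hwadj with ⟨e1, e2⟩ | ⟨e1, e2⟩ | ⟨e1, e2⟩ | ⟨e1, e2⟩
                    · exact absurd ((cell_eq e1 e2) ▸ hwP) hAL
                    · exact absurd ((cell_eq e1 (show w.2 = mv - 1 by omega)) ▸ hwP) hB2
                    · exact absurd ((cell_eq (show w.1 = xhi by omega) e1) ▸ hwP) hthole
                    · exact cell_eq (show w.1 = xhi - 2 by omega) e1
                  rw [hw] at hwP
                  exact FIN (xhi-2, Yv) (xhi-1, Yv) (xhi, mv-1) (xhi+1, mv-1) hwP hL hq hB3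
                    (ATH (by omega) hwP hL) (ATH (by omega) hq hB3)
                    (EZ2 (xhi-2) Yv xhi (mv-1) (by omega) (by omega))
                    (EZ2 (xhi-2) Yv (xhi+1) (mv-1) (by omega) (by omega))
                    (EZ2 (xhi-1) Yv xhi (mv-1) (by omega) (by omega))
                    (EZ2 (xhi-1) Yv (xhi+1) (mv-1) (by omega) (by omega))
            · -- the hole has a cell in a column strictly to the left
              obtain ⟨z, hzc, hz1⟩ := hcolint xlo le_rfl hxx
              obtain ⟨z1, z2⟩ := z
              dsimp only at hz1
              subst hz1
              have hzB := hbounds _ hzc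
              dsimp only at hzB
              have hy0a : z2 < Yv := by
                by_contra hcon
                have h1 : ((xlo, z2) : Cell).2 = Yv := by dsimp only; omega
                have := hR12 _ hzc h1
                dsimp only at this
                omega
              have hy0b : mv < z2 := by
                by_contra hcon
                have h1 : ((xlo, z2) : Cell).2 = mv := by dsimp only; omega
                have := hbotmin _ hzc h1
                dsimp only at this
                omega
              have hu'' : ((xlo - 1, z2) : Cell) ∈ P :=
                hPn _ _ hzc (adjacent_of _ _ (by dsimp only; omega)) (by dsimp only; omega)
              obtain ⟨v, hvP, hvadj⟩ := partner _ hu''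
              have hvf : z2 - 1 ≤ v.2 ∧ v.2 ≤ z2 + 1 ∧ xlo - 2 ≤ v.1 ∧ v.1 ≤ xlo := by
                have hsh := partner_shape' hvadj
                omega
              exact FIN (xlo-1, z2) v (xhi, mv-1) (xhi+1, mv-1) hu'' hvP hq hB3
                (attacks_adj hvadj hu'' hvP) (ATH (by omega) hq hB3)
                (EZ2 (xlo-1) z2 xhi (mv-1) (by omega) (by omega))
                (EZ2 (xlo-1) z2 (xhi+1) (mv-1) (by omega) (by omega))
                (EZ2 v.1 v.2 xhi (mv-1) (by omega) (by omega))
                (EZ2 v.1 v.2 (xhi+1) (mv-1) (by omega) (by omega))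
      · -- non-corner right-right : safe
        exact FIN (tx, Yv+1) (tx+1, Yv+1) (bx, mv-1) (bx+1, mv-1) hu hA2 hq hB3
          (ATH (by omega) hu hA2) (ATH (by omega) hq hB3)
          (TB2 tx (Yv+1) bx (mv-1) (by omega) (by omega) (by omega))
          (TB2 tx (Yv+1) (bx+1) (mv-1) (by omega) (by omega) (by omega))
          (TB2 (tx+1) (Yv+1) bx (mv-1) (by omega) (by omega) (by omega))
          (TB2 (tx+1) (Yv+1) (bx+1) (mv-1) (by omega) (by omega) (by omega))
  · -- A left forced
    have hA3 : ((tx-1, Yv+1) : Cell) ∈ P := hA23.resolve_left hA2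
    by_cases hB2 : ((bx - 1, mv - 1) : Cell) ∈ P
    · -- A left, B left
      by_cases hcorn : tx = xlo ∧ bx = xlo
      · -- harmful corner on the left
        obtain ⟨hc1, hc2⟩ := hcorn
        rw [hc1] at hu hA3 hthole htcomp hA1 hA2
        rw [hc2] at hq hB2 hbhole hbcomp hB1
        by_cases hblk : ∃ r : ℤ, mv - 1 < r ∧ r < Yv + 1 ∧ ((xlo - 1, r) : Cell) ∉ P
        · obtain ⟨r, hr1, hr2, hrP⟩ := hblk
          exact FIN (xlo-1, Yv+1) (xlo, Yv+1) (xlo-1, mv-1) (xlo, mv-1) hA3 hu hB2 hq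
            (ATH (by omega) hA3 hu) (ATH (by omega) hB2 hq)
            (BLK2 (xlo-1) (Yv+1) (mv-1) r hrP hr1 hr2)
            (EZ2 (xlo-1) (Yv+1) xlo (mv-1) (by omega) (by omega))
            (EZ2 xlo (Yv+1) (xlo-1) (mv-1) (by omega) (by omega))
            (TB2 xlo (Yv+1) xlo (mv-1) (by omega) (by omega) (by omega))
        · push_neg at hblk
          by_cases hL12 : ∃ z : Cell, comp z ∧ z.2 = mv ∧ xlo < z.1
          · obtain ⟨z, hzc, hz2, hz1⟩ := hL12
            obtain ⟨z1, z2⟩ := z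
            dsimp only at hz1 hz2
            subst hz2
            have hzB := hbounds _ hzc
            dsimp only at hzB
            have hq' : ((z1, mv - 1) : Cell) ∈ P :=
              hPn _ _ hzc (adjacent_of _ _ (by dsimp only; omega)) (by dsimp only; omega)
            obtain ⟨v, hvP, hvadj⟩ := partner _ hq'
            have hvf : v.2 < mv ∧ z1 - 1 ≤ v.1 ∧ v.1 ≤ z1 + 1 := by
              have hvne : ¬(v.1 = z1 ∧ v.2 = mv) :=
                fun h => (hcompP _ hzc) ((cell_eq h.1 h.2) ▸ hvP)
              have hsh := partner_shape' hvadj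
              omega
            exact FIN (xlo-1, Yv+1) (xlo, Yv+1) (z1, mv-1) v hA3 hu hq' hvP
              (ATH (by omega) hA3 hu) (attacks_adj hvadj hq' hvP)
              (TB2 (xlo-1) (Yv+1) z1 (mv-1) (by omega) (by omega) (by omega))
              (TB2 (xlo-1) (Yv+1) v.1 v.2 (by omega) (by omega) (by omega))
              (TB2 xlo (Yv+1) z1 (mv-1) (by omega) (by omega) (by omega))
              (TB2 xlo (Yv+1) v.1 v.2 (by omega) (by omega) (by omega))
          · push_neg at hL12
            by_cases hXhi : xhi = xlo
            · have hcolseg : ∀ r : ℤ, mv ≤ r → r ≤ Yv → comp ((xlo, r) : Cell) := by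
                intro r h1 h2
                obtain ⟨z, hzc, hz2⟩ := hrowint r h1 h2
                have hzB := hbounds _ hzc
                have hzeq : z = ((xlo, r) : Cell) := cell_eq (by omega) hz2
                rwa [hzeq] at hzc
              have hright : ∀ r : ℤ, mv ≤ r → r ≤ Yv → ((xlo + 1, r) : Cell) ∈ P := by
                intro r h1 h2
                exact hPn _ _ (hcolseg r h1 h2)
                  (adjacent_of _ _ (by dsimp only; omega)) (by dsimp only; omega)
              by_cases hmY2 : mv < Yv
              · exact FIN (xlo-1, Yv+1) (xlo, Yv+1) (xlo+1, mv) (xlo+1, mv+1) hA3 hu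
                  (hright mv le_rfl (by omega)) (hright (mv+1) (by omega) (by omega))
                  (ATH (by omega) hA3 hu)
                  (ATV (by omega) (hright mv le_rfl (by omega)) (hright (mv+1) (by omega) (by omega)))
                  (EZ2 (xlo-1) (Yv+1) (xlo+1) mv (by omega) (by omega))
                  (EZ2 (xlo-1) (Yv+1) (xlo+1) (mv+1) (by omega) (by omega))
                  (EZ2 xlo (Yv+1) (xlo+1) mv (by omega) (by omega))
                  (EZ2 xlo (Yv+1) (xlo+1) (mv+1) (by omega) (by omega))
              · have hmveq : mv = Yv := by omega
                have hR : ((xlo+1, Yv) : Cell) ∈ P := hright Yv (by omega) le_rfl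
                obtain ⟨w, hwP, hwadj⟩ := partner _ hR
                have hwf : (w.2 = Yv - 1 ∧ w.1 = xlo + 1) ∨ (w.2 = Yv ∧ w.1 = xlo + 2) := by
                  rcases partner_shape' hwadj with ⟨e1, e2⟩ | ⟨e1, e2⟩ | ⟨e1, e2⟩ | ⟨e1, e2⟩
                  · exact absurd ((cell_eq e1 e2) ▸ hwP) hA2
                  · exact Or.inl ⟨e2, e1⟩
                  · exact Or.inr ⟨e1, by omega⟩
                  · exact absurd ((cell_eq (show w.1 = xlo by omega) e1) ▸ hwP) hthole
                exact FIN (xlo-1, Yv+1) (xlo, Yv+1) (xlo+1, Yv) w hA3 hu hR hwP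
                  (ATH (by omega) hA3 hu) (attacks_adj hwadj hR hwP)
                  (EZ2 (xlo-1) (Yv+1) (xlo+1) Yv (by omega) (by omega))
                  (EZ2 (xlo-1) (Yv+1) w.1 w.2 (by omega) (by omega))
                  (EZ2 xlo (Yv+1) (xlo+1) Yv (by omega) (by omega))
                  (EZ2 xlo (Yv+1) w.1 w.2 (by omega) (by omega))
            · obtain ⟨z, hzc, hz1⟩ := hcolint xhi hxx le_rfl
              obtain ⟨z1, z2⟩ := z
              dsimp only at hz1
              subst hz1
              have hzB := hbounds _ hzc
              dsimp only at hzB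
              have hy0a : z2 < Yv := by
                by_contra hcon
                have h1 : ((xhi, z2) : Cell).2 = Yv := by dsimp only; omega
                have := htopmax _ hzc h1
                dsimp only at this
                omega
              have hy0b : mv < z2 := by
                by_contra hcon
                have h1 : ((xhi, z2) : Cell).2 = mv := by dsimp only; omega
                have := hL12 _ hzc h1
                dsimp only at this
                omega
              have hu'' : ((xhi + 1, z2) : Cell) ∈ P :=
                hPn _ _ hzc (adjacent_of _ _ (by dsimp only; omega)) (by dsimp only; omega)
              obtain ⟨v, hvP, hvadj⟩ := partner _ hu''
              have hvf : z2 - 1 ≤ v.2 ∧ v.2 ≤ z2 + 1 ∧ xhi ≤ v.1 ∧ v.1 ≤ xhi + 2 := by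
                have hsh := partner_shape' hvadj
                omega
              have hvne : ¬(v.1 = xhi ∧ v.2 = z2) :=
                fun h => (hcompP _ hzc) ((cell_eq h.1 h.2) ▸ hvP)
              have hvf2 : xlo < v.1 := by
                have hsh := partner_shape' hvadj
                omega
              exact FIN (xlo-1, Yv+1) (xlo, Yv+1) (xhi+1, z2) v hA3 hu hu'' hvP
                (ATH (by omega) hA3 hu) (attacks_adj hvadj hu'' hvP)
                (EZ2 (xlo-1) (Yv+1) (xhi+1) z2 (by omega) (by omega))
                (EZ2 (xlo-1) (Yv+1) v.1 v.2 (by omega) (by omega))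
                (EZ2 xlo (Yv+1) (xhi+1) z2 (by omega) (by omega))
                (EZ2 xlo (Yv+1) v.1 v.2 (by omega) (by omega))
      · -- non-corner left-left : safe
        exact FIN (tx-1, Yv+1) (tx, Yv+1) (bx-1, mv-1) (bx, mv-1) hA3 hu hB2 hq
          (ATH (by omega) hA3 hu) (ATH (by omega) hB2 hq)
          (TB2 (tx-1) (Yv+1) (bx-1) (mv-1) (by omega) (by omega) (by omega))
          (TB2 (tx-1) (Yv+1) bx (mv-1) (by omega) (by omega) (by omega))
          (TB2 tx (Yv+1) (bx-1) (mv-1) (by omega) (by omega) (by omega))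
          (TB2 tx (Yv+1) bx (mv-1) (by omega) (by omega) (by omega))
    · -- A left, B right : always safe
      have hB3 : ((bx+1, mv-1) : Cell) ∈ P := hB23.resolve_left hB2
      exact FIN (tx-1, Yv+1) (tx, Yv+1) (bx, mv-1) (bx+1, mv-1) hA3 hu hq hB3
        (ATH (by omega) hA3 hu) (ATH (by omega) hq hB3)
        (TB2 (tx-1) (Yv+1) bx (mv-1) (by omega) (by omega) (by omega))
        (TB2 (tx-1) (Yv+1) (bx+1) (mv-1) (by omega) (by omega) (by omega))
        (TB2 tx (Yv+1) bx (mv-1) (by omega) (by omega) (by omega))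
        (TB2 tx (Yv+1) (bx+1) (mv-1) (by omega) (by omega) (by omega))
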